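/- Let (s₁ˡ) be nonnegative reals and (s₂ᵗ) ∈ (0,1). Then ∑_{r=0}^{k−1} s₂ʳ (∑_{l=r}^{k−1} s₁ˡ) ∏_{t=r}^{k−1} (1 − s₂^{t+1}) + (∑_{l=0}^{k−1} s₁ˡ) ∏_{t=0}^{k} (1 − s₂ᵗ) = ∑_{l=0}^{k−1} s₁ˡ ∏_{t=l}^{k−1} (1 − s₂^{t+1}). -/

import Mathlib

open Finset

lemma bias_aux (s₂ : ℕ → ℝ) : ∀ l : ℕ,
    (∑ r ∈ Finset.range (l+1), s₂ r * ∏ t ∈ Finset.Ico r l, (1 - s₂ (t+1)))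
      + ∏ t ∈ Finset.range (l+1), (1 - s₂ t) = 1 := by
  intro l
  induction l with
  | zero => simp
  | succ n ih =>
    rw [Finset.sum_range_succ, Finset.prod_range_succ]
    have h1 : ∀ r ∈ Finset.range (n+1),
        s₂ r * ∏ t ∈ Finset.Ico r (n+1), (1 - s₂ (t+1))
          = (s₂ r * ∏ t ∈ Finset.Ico r n, (1 - s₂ (t+1))) * (1 - s₂ (n+1)) := by
      intro r hr
      rw [Finset.prod_Ico_succ_top (Nat.lt_succ_iff.mp (Finset.mem_range.mp hr))]
      ring
    rw [Finset.sum_congr rfl h1, ← Finset.sum_mul]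
    simp only [Finset.Ico_self, Finset.prod_empty, mul_one]
    linear_combination (1 - s₂ (n+1)) * ih

theorem bias_reordering_identity (s₁ s₂ : ℕ → ℝ) (h₁ : ∀ l, 0 ≤ s₁ l)
    (h₂ : ∀ t, s₂ t ∈ Set.Ioo (0:ℝ) 1) (k : ℕ) :
    (∑ r ∈ Finset.range k, s₂ r * (∑ l ∈ Finset.Ico r k, s₁ l) *
        ∏ t ∈ Finset.Ico r k, (1 - s₂ (t+1)))
      + (∑ l ∈ Finset.range k, s₁ l) * ∏ t ∈ Finset.range (k+1), (1 - s₂ t)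
    = ∑ l ∈ Finset.range k, s₁ l * ∏ t ∈ Finset.Ico l k, (1 - s₂ (t+1)) := by
  have hswap :
      (∑ r ∈ Finset.range k, s₂ r * (∑ l ∈ Finset.Ico r k, s₁ l) *
          ∏ t ∈ Finset.Ico r k, (1 - s₂ (t+1)))
        = ∑ l ∈ Finset.range k, (∑ r ∈ Finset.range (l+1),
            s₂ r * ∏ t ∈ Finset.Ico r k, (1 - s₂ (t+1))) * s₁ l := by
    rw [Finset.range_eq_Ico]
    rw [show (∑ r ∈ Finset.Ico 0 k, s₂ r * (∑ l ∈ Finset.Ico r k, s₁ l) *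
          ∏ t ∈ Finset.Ico r k, (1 - s₂ (t+1)))
        = ∑ r ∈ Finset.Ico 0 k, ∑ l ∈ Finset.Ico r k,
            (s₂ r * ∏ t ∈ Finset.Ico r k, (1 - s₂ (t+1))) * s₁ l by
      refine Finset.sum_congr rfl fun r _ => ?_
      rw [mul_assoc, Finset.sum_mul, Finset.mul_sum]
      exact Finset.sum_congr rfl fun _ _ => by ring]
    rw [Finset.sum_Ico_Ico_comm]
    refine Finset.sum_congr rfl fun l _ => ?_
    rw [← Finset.sum_mul, Finset.range_eq_Ico]
  rw [hswap, Finset.sum_mul, ← Finset.sum_add_distrib]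
  refine Finset.sum_congr rfl fun l hl => ?_
  have hlk : l + 1 ≤ k := Finset.mem_range.mp hl
  have hP : ∀ r ∈ Finset.range (l+1),
      s₂ r * ∏ t ∈ Finset.Ico r k, (1 - s₂ (t+1))
        = (s₂ r * ∏ t ∈ Finset.Ico r l, (1 - s₂ (t+1)))
            * ∏ t ∈ Finset.Ico l k, (1 - s₂ (t+1)) := by
    intro r hr
    rw [← Finset.prod_Ico_consecutive _ (Nat.lt_succ_iff.mp (Finset.mem_range.mp hr))
      (le_of_lt (Finset.mem_range.mp hl))]
    ring
  have hQ : ∏ t ∈ Finset.range (k+1), (1 - s₂ t)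
      = (∏ t ∈ Finset.range (l+1), (1 - s₂ t)) * ∏ t ∈ Finset.Ico l k, (1 - s₂ (t+1)) := by
    rw [← Finset.prod_range_mul_prod_Ico (fun t => 1 - s₂ t) (Nat.succ_le_succ (le_of_lt (Finset.mem_range.mp hl)))]
    congr 1
    rw [← Nat.add_one, ← Nat.add_one]
    exact (Finset.prod_Ico_add' (fun t => 1 - s₂ t) l k 1).symm
  rw [hQ]
  calc (∑ r ∈ Finset.range (l+1), s₂ r * ∏ t ∈ Finset.Ico r k, (1 - s₂ (t+1))) * s₁ l
        + s₁ l * ((∏ t ∈ Finset.range (l+1), (1 - s₂ t)) * ∏ t ∈ Finset.Ico l k, (1 - s₂ (t+1)))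
      = ((∑ r ∈ Finset.range (l+1), s₂ r * ∏ t ∈ Finset.Ico r l, (1 - s₂ (t+1)))
          + ∏ t ∈ Finset.range (l+1), (1 - s₂ t))
          * (s₁ l * ∏ t ∈ Finset.Ico l k, (1 - s₂ (t+1))) := by
        rw [Finset.sum_congr rfl hP, ← Finset.sum_mul]
        ring
    _ = s₁ l * ∏ t ∈ Finset.Ico l k, (1 - s₂ (t+1)) := by rw [bias_aux s₂ l, one_mul]
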